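/- Let p ≥ 1 be an integer, let x₁, …, x_p be the p distinct roots of the Legendre polynomial L_p, and define the weights w_k = ∫_{−1}^{1} ∏_{j≠k} (x − x_j)/(x_k − x_j) dx for k = 1, …, p. Then the p-point Gauss–Legendre quadrature rule Q̂_p(g) = Σ_{k=1}^{p} w_k·g(x_k) is exact of degree 2p − 1, i.e., Σ_{k=1}^{p} w_k·q(x_k) = ∫_{−1}^{1} q(x) dx for every polynomial q of degree ≤ 2p − 1. -/

import Mathlib

open Polynomial intervalIntegral

/-- `iteratedDeriv` of a polynomial evaluation is the evaluation of the iterated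
formal derivative. -/
lemma gl_iteratedDeriv_eval (g : Polynomial ℝ) (n : ℕ) (x : ℝ) :
    iteratedDeriv n (fun y => g.eval y) x = (derivative^[n] g).eval x := by
  induction n generalizing g with
  | zero => simp
  | succ n ih =>
    rw [iteratedDeriv_succ', Function.iterate_succ_apply]
    rw [← ih (derivative g)]
    congr 1
    funext y
    exact (Polynomial.deriv g)

/-- Key orthogonality via repeated integration by parts. -/
lemma gl_key_orth (p : ℕ) :
    ∀ j ≤ p, ∀ s : Polynomial ℝ, derivative^[j] s = 0 →
      ∫ t in (-1:ℝ)..1,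
        (derivative^[j] (((X:Polynomial ℝ)^2 - 1)^p)).eval t * s.eval t = 0 := by
  set f : Polynomial ℝ := ((X:Polynomial ℝ)^2 - 1)^p with hf
  have hroot : ∀ j < p, ∀ a : ℝ, a = 1 ∨ a = -1 → (derivative^[j] f).eval a = 0 := by
    intro j hj a ha
    have hfne : f ≠ 0 := by
      apply pow_ne_zero
      intro h
      have := congrArg (Polynomial.eval (2:ℝ)) h
      norm_num at this
    have hdvd : ((X:Polynomial ℝ) - C a)^p ∣ f := by
      apply pow_dvd_pow_of_dvd
      rcases ha with rfl | rfl
      · exact ⟨X + C 1, by simp only [Polynomial.C_1]; ring⟩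
      · exact ⟨X - C 1, by simp only [Polynomial.C_1, Polynomial.C_neg]; ring⟩
    have hmult : p ≤ rootMultiplicity a f := (Polynomial.le_rootMultiplicity_iff hfne).2 hdvd
    exact Polynomial.isRoot_iterate_derivative_of_lt_rootMultiplicity (lt_of_lt_of_le hj hmult)
  intro j
  induction j with
  | zero =>
    intro _ s hs
    simp only [Function.iterate_zero_apply] at hs
    simp [hs]
  | succ j ih =>
    intro hjp s hs
    have hj : j < p := hjp
    have hcont : ∀ g : Polynomial ℝ, Continuous (fun t : ℝ => g.eval t) := fun g => g.continuous
    have ibp := intervalIntegral.integral_deriv_mul_eq_sub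
      (u := fun t => (derivative^[j] f).eval t) (v := fun t => s.eval t)
      (u' := fun t => (derivative^[j+1] f).eval t) (v' := fun t => (derivative s).eval t)
      (a := (-1:ℝ)) (b := 1)
      (fun t _ => by
        have := Polynomial.hasDerivAt (derivative^[j] f) t
        rwa [← Function.iterate_succ_apply' derivative j f] at this)
      (fun t _ => Polynomial.hasDerivAt s t)
      ((hcont _).intervalIntegrable _ _) ((hcont _).intervalIntegrable _ _)
    rw [hroot j hj 1 (Or.inl rfl), hroot j hj (-1) (Or.inr rfl), zero_mul, zero_mul,
      sub_zero] at ibp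
    rw [intervalIntegral.integral_add (f := fun t => (derivative^[j+1] f).eval t * s.eval t) (g := fun t => (derivative^[j] f).eval t * (derivative s).eval t) (((hcont _).mul (hcont _)).intervalIntegrable _ _)
      (((hcont _).mul (hcont _)).intervalIntegrable _ _)] at ibp
    have h2 : ∫ t in (-1:ℝ)..1, (derivative^[j] f).eval t * (derivative s).eval t = 0 := by
      apply ih (le_of_lt hj) (derivative s)
      rw [← Function.iterate_succ_apply]
      exact hs
    rw [h2, add_zero] at ibp
    exact ibp

/-- Degree of the iterated derivative of `(X^2-1)^p`. -/
lemma gl_deg_iter (p : ℕ) :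
    ∀ j ≤ 2 * p, derivative^[j] (((X:Polynomial ℝ)^2 - 1)^p) ≠ 0 ∧
      (derivative^[j] (((X:Polynomial ℝ)^2 - 1)^p)).natDegree = 2 * p - j := by
  set f : Polynomial ℝ := ((X:Polynomial ℝ)^2 - 1)^p with hf
  have hmonic : f.Monic := by
    apply Polynomial.Monic.pow
    have : ((X:Polynomial ℝ)^2 - 1) = X^2 - C 1 := by simp
    rw [this]
    exact Polynomial.monic_X_pow_sub_C _ (by norm_num)
  have hdeg : f.natDegree = 2 * p := by
    have h1 : ((X:Polynomial ℝ)^2 - 1).natDegree = 2 := by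
      have : ((X:Polynomial ℝ)^2 - 1) = X^2 - C 1 := by simp
      rw [this]
      exact Polynomial.natDegree_X_pow_sub_C
    rw [hf, Polynomial.natDegree_pow, h1]
    ring
  intro j
  induction j with
  | zero => simpa [hdeg] using hmonic.ne_zero
  | succ j ih =>
    intro hj
    obtain ⟨hne, hd⟩ := ih (by omega)
    have hpos : 0 < (derivative^[j] f).natDegree := by omega
    have := Polynomial.degree_derivative_eq (derivative^[j] f) hpos
    rw [Function.iterate_succ_apply']
    constructor
    · intro h
      rw [h, Polynomial.degree_zero] at this
      exact (WithBot.natCast_ne_bot _) this.symm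
    · have h2 := Polynomial.natDegree_eq_of_degree_eq_some this
      rw [h2, hd]
      omega

/-- The Legendre polynomial `L_n` on `ℝ`, defined via the Rodrigues formula. -/
noncomputable def legendre (n : ℕ) : ℝ → ℝ :=
  fun x => (1 / ((2 : ℝ) ^ n * (n.factorial : ℝ))) *
    iteratedDeriv n (fun y => (y ^ 2 - 1) ^ n) x

/-- Let `x₁, …, x_p` be the `p` distinct roots of the Legendre polynomial
`L_p`, and let `w_k = ∫_{-1}^1 ∏_{j ≠ k} (t - x_j)/(x_k - x_j) dt`. Then the `p`-point
Gauss–Legendre quadrature rule is exact of degree `2p - 1`. -/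
theorem statement13 (p : ℕ) (hp : 1 ≤ p) (x : Fin p → ℝ)
    (hxinj : Function.Injective x) (hxroot : ∀ k, legendre p (x k) = 0)
    (w : Fin p → ℝ)
    (hw : ∀ k, w k = ∫ t in (-1 : ℝ)..1,
      ∏ j ∈ Finset.univ.erase k, (t - x j) / (x k - x j)) :
    ∀ q : Polynomial ℝ, q.natDegree ≤ 2 * p - 1 →
      ∑ k, w k * q.eval (x k) = ∫ t in (-1 : ℝ)..1, q.eval t := by
  intro q hq
  haveI : NeZero p := ⟨by omega⟩
  set f : Polynomial ℝ := ((X:Polynomial ℝ)^2 - 1)^p with hfdef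
  set P : Polynomial ℝ := derivative^[p] f with hPdef
  obtain ⟨hPne, hPdeg⟩ := gl_deg_iter p p (by omega)
  have hPdeg' : P.natDegree = p := by rw [hPdeg]; omega
  have hcont : ∀ g : Polynomial ℝ, Continuous (fun t : ℝ => g.eval t) := fun g => g.continuous
  -- the nodes are roots of P
  have hProot : ∀ k, P.eval (x k) = 0 := by
    intro k
    have h1 := hxroot k
    unfold legendre at h1
    have h2 : (fun y : ℝ => (y ^ 2 - 1) ^ p) = fun y => f.eval y := by
      funext y; simp [hfdef]
    rw [h2, gl_iteratedDeriv_eval] at h1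
    have h3 : (1 / ((2 : ℝ) ^ p * (p.factorial : ℝ))) ≠ 0 := by
      positivity
    exact (mul_eq_zero.mp h1).resolve_left h3
  -- the nodal polynomial
  set N : Polynomial ℝ := ∏ k : Fin p, (X - C (x k)) with hNdef
  have hNmonic : N.Monic := monic_prod_of_monic _ _ (fun k _ => monic_X_sub_C _)
  have hNdeg : N.natDegree = p := by
    rw [hNdef, Polynomial.natDegree_prod _ _ (fun k _ => X_sub_C_ne_zero _)]
    simp [Polynomial.natDegree_X_sub_C]
  have hNevalzero : ∀ k, N.eval (x k) = 0 := by
    intro k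
    rw [hNdef, Polynomial.eval_prod]
    exact Finset.prod_eq_zero (Finset.mem_univ k) (by simp)
  -- N divides P
  have hNdvd : N ∣ P := by
    have hm : (Finset.univ.val.map x) ≤ P.roots := by
      rw [Multiset.le_iff_subset (Finset.univ.nodup.map hxinj)]
      intro a ha
      obtain ⟨k, _, rfl⟩ := Multiset.mem_map.mp ha
      rw [Polynomial.mem_roots hPne]
      exact hProot k
    have hdvd2 := (Multiset.prod_X_sub_C_dvd_iff_le_roots hPne (Finset.univ.val.map x)).2 hm
    have hNeq : (Multiset.map (fun a => (X:Polynomial ℝ) - C a) (Multiset.map x Finset.univ.val)).prod = N := by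
      rw [Multiset.map_map, hNdef, Finset.prod_eq_multiset_prod]
      rfl
    rwa [hNeq] at hdvd2
  obtain ⟨g, hPg⟩ := hNdvd
  have hgne : g ≠ 0 := by
    intro h; rw [h, mul_zero] at hPg; exact hPne hPg
  have hgdeg : g.natDegree = 0 := by
    have := Polynomial.natDegree_mul hNmonic.ne_zero hgne
    rw [← hPg, hPdeg', hNdeg] at this
    omega
  obtain ⟨c, rfl⟩ := Polynomial.natDegree_eq_zero.mp hgdeg
  have hcne : c ≠ 0 := by
    intro h; rw [h, map_zero] at hgne; exact hgne rfl
  -- weights are integrals of Lagrange basis polynomials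
  have hinjOn : Set.InjOn x ↑(Finset.univ : Finset (Fin p)) := fun a _ b _ h => hxinj h
  have hwk : ∀ k, w k = ∫ t in (-1:ℝ)..1, (Lagrange.basis Finset.univ x k).eval t := by
    intro k
    rw [hw k]
    congr 1
    funext t
    rw [Lagrange.basis, Polynomial.eval_prod]
    apply Finset.prod_congr rfl
    intro j _
    simp [Lagrange.basisDivisor, div_eq_mul_inv, mul_comm]
  -- exactness for degree < p via Lagrange interpolation
  have lag : ∀ r : Polynomial ℝ, r.degree < (p : WithBot ℕ) →
      ∑ k, w k * r.eval (x k) = ∫ t in (-1:ℝ)..1, r.eval t := by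
    intro r hr
    have hcard : r.degree < ((Finset.univ : Finset (Fin p)).card : WithBot ℕ) := by
      rwa [Finset.card_univ, Fintype.card_fin]
    have hi := Lagrange.eq_interpolate hinjOn hcard
    conv_rhs => rw [hi]
    rw [Lagrange.interpolate_apply]
    rw [show (fun t : ℝ => Polynomial.eval t (∑ i : Fin p, C (r.eval (x i)) * Lagrange.basis Finset.univ x i)) = fun t => ∑ i : Fin p, r.eval (x i) * (Lagrange.basis Finset.univ x i).eval t from by funext t; rw [Polynomial.eval_finset_sum]; simp]
    rw [intervalIntegral.integral_finset_sum (fun i _ => (by fun_prop : Continuous (fun t : ℝ => r.eval (x i) * (Lagrange.basis Finset.univ x i).eval t)).intervalIntegrable _ _)]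
    apply Finset.sum_congr rfl
    intro k _
    rw [intervalIntegral.integral_const_mul, hwk k, mul_comm]
  -- polynomial division
  have hq2 : q = q %ₘ N + N * (q /ₘ N) := (Polynomial.modByMonic_add_div q N).symm
  set s : Polynomial ℝ := q /ₘ N with hsdef
  set r : Polynomial ℝ := q %ₘ N with hrdef
  have hrdeg : r.degree < (p : WithBot ℕ) := by
    have := Polynomial.degree_modByMonic_lt q hNmonic
    rwa [Polynomial.degree_eq_natDegree hNmonic.ne_zero, hNdeg] at this
  have hsdeg : s.natDegree < p := by
    have h1 : s.natDegree = q.natDegree - N.natDegree := Polynomial.natDegree_divByMonic q hNmonic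
    have h2 : N.natDegree = p := hNdeg
    have h3 : q.natDegree ≤ 2 * p - 1 := hq
    omega
  -- the orthogonality integral vanishes
  have horth : ∫ t in (-1:ℝ)..1, N.eval t * s.eval t = 0 := by
    have hkey := gl_key_orth p p le_rfl s (Polynomial.iterate_derivative_eq_zero hsdeg)
    have hNP : ∀ t : ℝ, N.eval t * s.eval t = c⁻¹ * (P.eval t * s.eval t) := by
      intro t
      have : P.eval t = N.eval t * c := by rw [hPg]; simp
      rw [this]
      field_simp
    simp_rw [hNP]
    rw [intervalIntegral.integral_const_mul, hkey, mul_zero]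
  -- conclude
  have hqeval : ∀ k, q.eval (x k) = r.eval (x k) := by
    intro k
    conv_lhs => rw [hq2]
    simp [hNevalzero k]
  calc ∑ k, w k * q.eval (x k) = ∑ k, w k * r.eval (x k) := by
        apply Finset.sum_congr rfl; intro k _; rw [hqeval k]
    _ = ∫ t in (-1:ℝ)..1, r.eval t := lag r hrdeg
    _ = ∫ t in (-1:ℝ)..1, q.eval t := by
        conv_rhs => rw [hq2]
        rw [show (fun t : ℝ => Polynomial.eval t (r + N * s)) = fun t => r.eval t + N.eval t * s.eval t from by funext t; simp]
        rw [intervalIntegral.integral_add (g := fun t => N.eval t * s.eval t) ((hcont r).intervalIntegrable _ _) (((hcont N).mul (hcont s)).intervalIntegrable _ _), horth, add_zero]
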